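/- arXiv:1905.06146 — 2 statements merged into one kernel-verified Lean document; each statement's English description precedes it below -/
import Mathlib

section
/- With the notation of the previous statement, for every x ≠ 0: |Dφ(x)|^γ · M⁺_{λ,Λ}(D²φ(x)) ≤ m. Consequently, if F is uniformly elliptic with F(0)=0 and f satisfies inf f ≥ m > 0, then φ is a classical subsolution-comparison barrier: |Dφ|^γ F(D²φ) − f(x) ≤ 0 pointwise for x ≠ 0. -/
open Matrix

/-- The Pucci minimal operator `M⁻_{λ,Λ}(X) = λ Σ_{e_i>0} e_i + Λ Σ_{e_i<0} e_i`,
where the `e_i` are the eigenvalues of the symmetric (Hermitian) matrix `X`. -/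
noncomputable def pucciMinus {n : ℕ} (lam Lam : ℝ) (X : Matrix (Fin n) (Fin n) ℝ)
    (hX : X.IsHermitian) : ℝ :=
  ∑ i, (lam * max (hX.eigenvalues i) 0 + Lam * min (hX.eigenvalues i) 0)

/-- The Pucci maximal operator `M⁺_{λ,Λ}(X) = Λ Σ_{e_i>0} e_i + λ Σ_{e_i<0} e_i`. -/
noncomputable def pucciPlus {n : ℕ} (lam Lam : ℝ) (X : Matrix (Fin n) (Fin n) ℝ)
    (hX : X.IsHermitian) : ℝ :=
  ∑ i, (Lam * max (hX.eigenvalues i) 0 + lam * min (hX.eigenvalues i) 0)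

/-- `F` is uniformly elliptic with ellipticity constants `λ ≤ Λ`:
`M⁻_{λ,Λ}(X−Y) ≤ F(X) − F(Y) ≤ M⁺_{λ,Λ}(X−Y)` for all symmetric `X, Y`. -/
def UniformlyElliptic {n : ℕ} (lam Lam : ℝ) (F : Matrix (Fin n) (Fin n) ℝ → ℝ) : Prop :=
  ∀ X Y : Matrix (Fin n) (Fin n) ℝ, ∀ h : (X - Y).IsHermitian,
    pucciMinus lam Lam (X - Y) h ≤ F X - F Y ∧ F X - F Y ≤ pucciPlus lam Lam (X - Y) h

lemma pucciPlus_congr {n : ℕ} (lam Lam : ℝ) {X Y : Matrix (Fin n) (Fin n) ℝ}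
    (h : X = Y) (hX : X.IsHermitian) (hY : Y.IsHermitian) :
    pucciPlus lam Lam X hX = pucciPlus lam Lam Y hY := by
  subst h; rfl

/-- for the barrier `φ(x) = c|x|^{(γ+2)/(γ+1)}`, at any `x ≠ 0` one has
`|Dφ(x)|^γ · M⁺_{λ,Λ}(D²φ(x)) ≤ m`; consequently, for any uniformly elliptic `F` with
`F(0)=0` and any source `f` with `inf f ≥ m`, `|Dφ|^γ F(D²φ) − f(x) ≤ 0`.  The Hessian
`D²φ(x)` is represented by a symmetric matrix `X` whose eigenvalues are
`μ₁ = c (γ+2)/(γ+1)² |x|^{−γ/(γ+1)}` (once) and `μ₂ = c (γ+2)/(γ+1) |x|^{−γ/(γ+1)}`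
(`n−1` times). -/
theorem radial_barrier_is_supersolution {n : ℕ} (γ lam Lam m c : ℝ)
    (hγ : 0 < γ) (hlam : 0 < lam) (hll : lam ≤ Lam) (hm : 0 < m)
    (hc : c = (m * (γ + 1) ^ (γ + 2) /
      ((lam + n * (γ + 1) * Lam) * (γ + 2) ^ (γ + 1))) ^ (1 / (γ + 1)))
    (x : EuclideanSpace ℝ (Fin n)) (hx : x ≠ 0)
    (X : Matrix (Fin n) (Fin n) ℝ) (hX : X.IsHermitian)
    (hEig : ∃ i₀ : Fin n,
      hX.eigenvalues i₀ = c * ((γ + 2) / (γ + 1) ^ 2) * ‖x‖ ^ (-γ / (γ + 1)) ∧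
      ∀ i ≠ i₀, hX.eigenvalues i = c * ((γ + 2) / (γ + 1)) * ‖x‖ ^ (-γ / (γ + 1))) :
    (c * ((γ + 2) / (γ + 1)) * ‖x‖ ^ (1 / (1 + γ))) ^ γ * pucciPlus lam Lam X hX ≤ m ∧
    ∀ F : Matrix (Fin n) (Fin n) ℝ → ℝ, UniformlyElliptic lam Lam F → F 0 = 0 →
      ∀ f : EuclideanSpace ℝ (Fin n) → ℝ, (∀ y, m ≤ f y) →
        (c * ((γ + 2) / (γ + 1)) * ‖x‖ ^ (1 / (1 + γ))) ^ γ * F X - f x ≤ 0 := by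
  obtain ⟨i₀, h₀, h₁⟩ := hEig
  have hn : 0 < n := i₀.pos
  have hn1 : (1:ℝ) ≤ (n:ℝ) := by exact_mod_cast hn
  have hr : 0 < ‖x‖ := norm_pos_iff.mpr hx
  have hg1 : (0:ℝ) < γ + 1 := by linarith
  have hg2 : (0:ℝ) < γ + 2 := by linarith
  have hLam : 0 < Lam := lt_of_lt_of_le hlam hll
  have hD : 0 < lam + n * (γ + 1) * Lam := by positivity
  have hA : 0 < m * (γ + 1) ^ (γ + 2) / ((lam + n * (γ + 1) * Lam) * (γ + 2) ^ (γ + 1)) := by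
    positivity
  have hcpos : 0 < c := hc ▸ Real.rpow_pos_of_pos hA _
  have hcpow : c ^ (γ + 1) =
      m * (γ + 1) ^ (γ + 2) / ((lam + n * (γ + 1) * Lam) * (γ + 2) ^ (γ + 1)) := by
    rw [hc, ← Real.rpow_mul hA.le, one_div_mul_cancel hg1.ne', Real.rpow_one]
  set r := ‖x‖ with hr_def
  set p := r ^ (-γ / (γ + 1)) with hp_def
  have hp : 0 < p := Real.rpow_pos_of_pos hr _
  set q := r ^ (1 / (1 + γ)) with hq_def
  have hq : 0 < q := Real.rpow_pos_of_pos hr _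
  set B := c * ((γ + 2) / (γ + 1)) with hB_def
  have hB : 0 < B := by rw [hB_def]; positivity
  have hqp : q ^ γ * p = 1 := by
    rw [hq_def, hp_def, ← Real.rpow_mul hr.le, ← Real.rpow_add hr]
    rw [show 1 / (1 + γ) * γ + -γ / (γ + 1) = 0 by field_simp; ring]
    exact Real.rpow_zero r
  have heig : ∀ i, 0 ≤ hX.eigenvalues i := by
    intro i
    by_cases hi : i = i₀
    · rw [hi, h₀]; positivity
    · rw [h₁ i hi]; positivity
  have hpp : pucciPlus lam Lam X hX =
      Lam * (c * ((γ + 2) / (γ + 1) ^ 2) * p + ((n:ℝ) - 1) * (B * p)) := by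
    unfold pucciPlus
    rw [Finset.sum_congr rfl (fun i _ => by
      rw [max_eq_left (heig i), min_eq_right (heig i), mul_zero, add_zero]),
      ← Finset.mul_sum]
    congr 1
    rw [← Finset.add_sum_erase _ _ (Finset.mem_univ i₀), h₀]
    congr 1
    rw [Finset.sum_congr rfl (fun i hi => h₁ i (Finset.ne_of_mem_erase hi)),
      Finset.sum_const, Finset.card_erase_of_mem (Finset.mem_univ i₀),
      Finset.card_univ, Fintype.card_fin, nsmul_eq_mul, Nat.cast_sub hn]
    push_cast
    ring
  have part1 : (B * q) ^ γ * pucciPlus lam Lam X hX ≤ m := by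
    have step1 : (B * q) ^ γ * pucciPlus lam Lam X hX =
        (B ^ γ * B) * (q ^ γ * p) * (Lam * (1 / (γ + 1) + ((n:ℝ) - 1))) := by
      rw [hpp, Real.mul_rpow hB.le hq.le, hB_def]
      field_simp
    have hBp : B ^ γ * B = B ^ (γ + 1) := (Real.rpow_add_one hB.ne' γ).symm
    rw [step1, hqp, hBp, mul_one]
    have hBe : B ^ (γ + 1) = c ^ (γ + 1) * ((γ + 2) ^ (γ + 1) / (γ + 1) ^ (γ + 1)) := by
      rw [hB_def, Real.mul_rpow hcpos.le (by positivity), Real.div_rpow hg2.le hg1.le]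
    have hge : (γ + 1) ^ (γ + 2) = (γ + 1) ^ (γ + 1) * (γ + 1) := by
      rw [show γ + 2 = (γ + 1) + 1 by ring, Real.rpow_add_one hg1.ne']
    rw [hBe, hcpow, hge]
    have hS : (0:ℝ) < (γ + 2) ^ (γ + 1) := Real.rpow_pos_of_pos hg2 _
    have hT : (0:ℝ) < (γ + 1) ^ (γ + 1) := Real.rpow_pos_of_pos hg1 _
    have key : m * ((γ + 1) ^ (γ + 1) * (γ + 1)) /
          ((lam + ↑n * (γ + 1) * Lam) * (γ + 2) ^ (γ + 1)) *
          ((γ + 2) ^ (γ + 1) / (γ + 1) ^ (γ + 1)) *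
          (Lam * (1 / (γ + 1) + ((n:ℝ) - 1))) =
        m * (Lam * (1 + ((n:ℝ) - 1) * (γ + 1))) / (lam + ↑n * (γ + 1) * Lam) := by
      field_simp
    rw [key, div_le_iff₀ hD]
    nlinarith [mul_pos hm (show (0:ℝ) < lam + γ * Lam by positivity),
      mul_nonneg (mul_nonneg hm.le hLam.le) (mul_nonneg (by linarith : (0:ℝ) ≤ (n:ℝ) - 1) hg1.le)]
  refine ⟨part1, fun F hF hF0 f hf => ?_⟩
  have hher : (X - 0).IsHermitian := by simpa using hX
  have h2 := (hF X 0 hher).2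
  rw [hF0, sub_zero] at h2
  have hco : pucciPlus lam Lam (X - 0) hher = pucciPlus lam Lam X hX :=
    pucciPlus_congr lam Lam (sub_zero X) hher hX
  rw [hco] at h2
  have hBq : 0 ≤ (B * q) ^ γ := Real.rpow_nonneg (by positivity) _
  have := mul_le_mul_of_nonneg_left h2 hBq
  have hfx := hf x
  linarith
end

section
/- Porosity from quadratic non-degeneracy and quadratic growth: let E = ∂{u > φ} ∩ Ω̃ and suppose there are constants c, C > 0 such that for every x₀ ∈ E and small r: (i) there exists y ∈ ∂B_r(x₀) with u(y) − φ(y) ≥ c r², and (ii) u(z) − φ(z) ≤ C (dist(z, E))² for every z. Then E is porous with constant δ = (1/4)√(c/C): for every x₀ ∈ E and small r, there exists y with B_{2δr}(y) ⊆ B_{2r}(x₀) \ E. -/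
open Metric

/-- porosity of the free boundary from quadratic non-degeneracy (i) and
quadratic growth (ii), with porosity constant `δ = (1/4)√(c/C)`. -/
theorem free_boundary_porous {n : ℕ} (u φ : EuclideanSpace ℝ (Fin n) → ℝ)
    (E : Set (EuclideanSpace ℝ (Fin n))) (c C r₀ : ℝ)
    (hc : 0 < c) (hC : 0 < C) (hr₀ : 0 < r₀)
    (hnd : ∀ x₀ ∈ E, ∀ r : ℝ, 0 < r → r < r₀ →
      ∃ y ∈ sphere x₀ r, c * r ^ 2 ≤ u y - φ y)
    (hgrowth : ∀ z, u z - φ z ≤ C * (infDist z E) ^ 2) :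
    ∀ x₀ ∈ E, ∀ r : ℝ, 0 < r → r < r₀ →
      ∃ y, ball y (2 * ((1 / 4) * Real.sqrt (c / C)) * r) ⊆ ball x₀ (2 * r) \ E := by
  intro x₀ hx₀ r hr hrr₀
  obtain ⟨y, hy, hyc⟩ := hnd x₀ hx₀ r hr hrr₀
  set s := Real.sqrt (c / C) with hs
  have hs0 : 0 < s := Real.sqrt_pos.mpr (div_pos hc hC)
  have hs2 : s ^ 2 = c / C := Real.sq_sqrt (le_of_lt (div_pos hc hC))
  have hdy : dist y x₀ = r := mem_sphere.mp hy
  have hd0 : 0 ≤ infDist y E := Metric.infDist_nonneg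
  have h1 : c * r ^ 2 ≤ C * infDist y E ^ 2 := le_trans hyc (hgrowth y)
  have hcs : C * s ^ 2 = c := by rw [hs2]; field_simp
  have hkey : s * r ≤ infDist y E := by
    have h2 : (s * r) ^ 2 ≤ infDist y E ^ 2 := by
      have := (mul_le_mul_iff_right₀ hC).mp (by nlinarith : C * (s * r) ^ 2 ≤ C * infDist y E ^ 2)
      exact this
    calc s * r = Real.sqrt ((s * r) ^ 2) := (Real.sqrt_sq (by positivity)).symm
    _ ≤ Real.sqrt (infDist y E ^ 2) := Real.sqrt_le_sqrt h2
    _ = infDist y E := Real.sqrt_sq hd0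
  have hdle : infDist y E ≤ r := by
    calc infDist y E ≤ dist y x₀ := Metric.infDist_le_dist_of_mem hx₀
    _ = r := hdy
  refine ⟨y, fun z hz => ?_⟩
  have hzd : dist z y < 2 * ((1 / 4) * s) * r := mem_ball.mp hz
  have hρ : 2 * ((1 / 4) * s) * r ≤ infDist y E / 2 := by nlinarith
  constructor
  · have : dist z x₀ ≤ dist z y + dist y x₀ := dist_triangle z y x₀
    rw [mem_ball]
    nlinarith
  · intro hzE
    have : infDist y E ≤ dist y z := Metric.infDist_le_dist_of_mem hzE
    rw [dist_comm] at this
    nlinarith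
end
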